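/- For every Schwartz function ζ on ℝ and every Schwartz function f on ℝ, the Landau operator maps the Wigner-type transform W(ζ, f) to W(ζ̃, f), where ζ̃ := −ζ'' + b² x² ζ; that is, L_A[W(ζ,f)](x₁,x₂) = W(−ζ'' + b²(·)²ζ, f)(x₁,x₂) for all (x₁,x₂) ∈ ℝ². In particular, if ζ = φₙ then L_A[W(φₙ,f)] = b(2n+1) W(φₙ,f). -/

import Mathlib

open MeasureTheory Real

/-- Wigner-type transform: `W(φ,g)(x₁,x₂) = (2π)^{-1/2} ∫ e^{-i k x₂} φ(x₁ - k/b) g(k) dk`. -/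
noncomputable def wigner (b : ℝ) (φ g : ℝ → ℂ) : ℝ × ℝ → ℂ := fun x =>
  (Real.sqrt (2 * π))⁻¹ *
    ∫ k : ℝ, Complex.exp (-Complex.I * k * x.2) * φ (x.1 - k / b) * g k

/-- The Landau operator with gauge `A = b(0, x₁, 0)`:
`(L_A f)(x₁,x₂) = −∂²_{x₁} f − ∂²_{x₂} f − 2 i b x₁ ∂_{x₂} f + b² x₁² f`. -/
noncomputable def landauOp (b : ℝ) (f : ℝ × ℝ → ℂ) : ℝ × ℝ → ℂ := fun x =>
  -(deriv (deriv (fun t => f (t, x.2))) x.1)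
    - deriv (deriv (fun t => f (x.1, t))) x.2
    - 2 * Complex.I * b * x.1 * deriv (fun t => f (x.1, t)) x.2
    + b ^ 2 * x.1 ^ 2 * f x

/-- The `n`-th physicists' Hermite polynomial (as a function). -/
noncomputable def physHermite (n : ℕ) (x : ℝ) : ℝ :=
  (-1 : ℝ) ^ n * Real.exp (x ^ 2) * iteratedDeriv n (fun y => Real.exp (-(y ^ 2))) x

/-- The Landau eigenfunctions `φₙ(x) = aₙ b^{1/4} Hₙ(√b x) e^{−b x²/2}`,
`aₙ = (2ⁿ n!)^{−1/2} π^{−1/4}`. -/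
noncomputable def landauPhi (b : ℝ) (n : ℕ) (x : ℝ) : ℝ :=
  (Real.sqrt (2 ^ n * Nat.factorial n))⁻¹ * (π ^ ((1 : ℝ) / 4))⁻¹ *
    b ^ ((1 : ℝ) / 4) * physHermite n (Real.sqrt b * x) * Real.exp (-(b * x ^ 2) / 2)

noncomputable def wc : ℂ := ((Real.sqrt (2 * π))⁻¹ : ℝ)

lemma wigner_eq (b : ℝ) (φ g : ℝ → ℂ) (x : ℝ × ℝ) :
    wigner b φ g x = wc * ∫ k : ℝ, Complex.exp (-Complex.I * k * x.2) * φ (x.1 - k / b) * g k :=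
  rfl

lemma norm_exp_neg_I (k s : ℝ) : ‖Complex.exp (-Complex.I * k * s)‖ = 1 := by
  have h : -Complex.I * k * s = ((-(k * s) : ℝ) : ℂ) * Complex.I := by push_cast; ring
  rw [h, Complex.norm_exp_ofReal_mul_I]

lemma hasDerivAt_exp_aux (k s : ℝ) :
    HasDerivAt (fun s : ℝ => Complex.exp (-Complex.I * k * s))
      (-Complex.I * k * Complex.exp (-Complex.I * k * s)) s := by
  have h1 := ((Complex.ofRealCLM.hasDerivAt (x := s)).const_mul (-Complex.I * k)).cexp
  simp only [Complex.ofRealCLM_apply, Complex.ofReal_one, mul_one] at h1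
  convert h1 using 1
  ring

theorem hasDerivAt_int_exp (G : ℝ → ℂ) (hGm : AEStronglyMeasurable G volume)
    (hG : Integrable G) (hG1 : Integrable (fun k : ℝ => ‖k‖ * ‖G k‖)) (s₀ : ℝ) :
    HasDerivAt (fun s : ℝ => ∫ k : ℝ, Complex.exp (-Complex.I * k * s) * G k)
      (∫ k : ℝ, -Complex.I * k * Complex.exp (-Complex.I * k * s₀) * G k) s₀ := by
  have hc : ∀ s : ℝ, Continuous fun k : ℝ => Complex.exp (-Complex.I * k * s) := fun s =>
    Complex.continuous_exp.comp ((continuous_const.mul Complex.continuous_ofReal).mul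
      continuous_const)
  have hc' : Continuous fun k : ℝ => -Complex.I * k * Complex.exp (-Complex.I * k * s₀) :=
    (continuous_const.mul Complex.continuous_ofReal).mul (hc s₀)
  refine (hasDerivAt_integral_of_dominated_loc_of_deriv_le (μ := volume)
    (F := fun (s : ℝ) (k : ℝ) => Complex.exp (-Complex.I * k * s) * G k)
    (F' := fun (s : ℝ) (k : ℝ) => -Complex.I * k * Complex.exp (-Complex.I * k * s) * G k)
    (bound := fun k => ‖k‖ * ‖G k‖) (Metric.ball_mem_nhds s₀ one_pos) ?_ ?_ ?_ ?_ hG1 ?_).2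
  · exact Filter.Eventually.of_forall fun s => ((hc s).aestronglyMeasurable).mul hGm
  · exact hG.bdd_mul ((hc s₀).aestronglyMeasurable) (c := 1) (Filter.Eventually.of_forall fun k => le_of_eq (norm_exp_neg_I k s₀))
  · exact hc'.aestronglyMeasurable.mul hGm
  · refine Filter.Eventually.of_forall fun k s _ => ?_
    rw [norm_mul, norm_mul, norm_exp_neg_I, mul_one, norm_mul]
    simp [Real.norm_eq_abs]
  · exact Filter.Eventually.of_forall fun k s _ => (hasDerivAt_exp_aux k s).mul_const (G k)

theorem hasDerivAt_int_shift (b x₂ : ℝ) (η g : ℝ → ℂ) (hη : Differentiable ℝ η)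
    (hb0 : ∃ C, ∀ y, ‖η y‖ ≤ C) (hb1 : ∃ C, ∀ y, ‖deriv η y‖ ≤ C)
    (hg : Integrable g volume) (t₀ : ℝ) :
    HasDerivAt (fun t : ℝ => ∫ k : ℝ, Complex.exp (-Complex.I * k * x₂) * η (t - k / b) * g k)
      (∫ k : ℝ, Complex.exp (-Complex.I * k * x₂) * deriv η (t₀ - k / b) * g k) t₀ := by
  obtain ⟨C0, hC0⟩ := hb0
  obtain ⟨C1, hC1⟩ := hb1
  have hce : Continuous fun k : ℝ => Complex.exp (-Complex.I * k * x₂) :=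
    Complex.continuous_exp.comp ((continuous_const.mul Complex.continuous_ofReal).mul
      continuous_const)
  have haff : ∀ t : ℝ, Continuous fun k : ℝ => t - k / b := fun t =>
    continuous_const.sub (continuous_id.div_const b)
  refine (hasDerivAt_integral_of_dominated_loc_of_deriv_le (μ := volume)
    (F := fun t k => Complex.exp (-Complex.I * k * x₂) * η (t - k / b) * g k)
    (F' := fun t k => Complex.exp (-Complex.I * k * x₂) * deriv η (t - k / b) * g k)
    (bound := fun k => C1 * ‖g k‖) (Metric.ball_mem_nhds t₀ one_pos) ?_ ?_ ?_ ?_ (hg.norm.const_mul C1) ?_).2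
  · exact Filter.Eventually.of_forall fun t =>
      ((hce.mul (hη.continuous.comp (haff t))).aestronglyMeasurable).mul hg.1
  · refine hg.bdd_mul ((hce.mul (hη.continuous.comp (haff t₀))).aestronglyMeasurable)
      (c := C0) (Filter.Eventually.of_forall fun k => ?_)
    rw [norm_mul, norm_exp_neg_I, one_mul]
    exact hC0 _
  · exact (hce.aestronglyMeasurable.mul
      (((measurable_deriv η).comp
        (measurable_const.sub (measurable_id.div_const b))).aestronglyMeasurable)).mul hg.1
  · refine Filter.Eventually.of_forall fun k t _ => ?_
    rw [norm_mul, norm_mul, norm_exp_neg_I, one_mul]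
    exact mul_le_mul_of_nonneg_right (hC1 _) (norm_nonneg _)
  · refine Filter.Eventually.of_forall fun k t _ => ?_
    have h1 : HasDerivAt (fun t : ℝ => η (t - k / b)) (deriv η (t - k / b)) t :=
      HasDerivAt.comp_sub_const t (k / b) ((hη (t - k / b)).hasDerivAt)
    exact (h1.const_mul (Complex.exp (-Complex.I * k * x₂))).mul_const (g k)

theorem landau_key (b : ℝ) (hb : 0 < b) (f : SchwartzMap ℝ ℂ) (η : ℝ → ℂ)
    (hη : Differentiable ℝ η) (hη' : Differentiable ℝ (deriv η))
    (h0 : ∃ C, ∀ y, ‖η y‖ ≤ C) (h1 : ∃ C, ∀ y, ‖deriv η y‖ ≤ C)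
    (h2 : ∃ C, ∀ y, ‖deriv (deriv η) y‖ ≤ C) (x : ℝ × ℝ) :
    landauOp b (wigner b η ⇑f) x =
      wigner b (fun y => -(deriv (deriv η) y) + (b : ℂ) ^ 2 * y ^ 2 * η y) ⇑f x := by
  obtain ⟨C0, hC0⟩ := h0
  obtain ⟨C2, hC2⟩ := h2
  have hbne : (b : ℂ) ≠ 0 := by exact_mod_cast hb.ne'
  have hg : Integrable (⇑f) volume := f.integrable
  have hgm : AEStronglyMeasurable (⇑f) volume := f.continuous.aestronglyMeasurable
  have hg1 := f.integrable_pow_mul volume 1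
  have hg2 := f.integrable_pow_mul volume 2
  have hce : Continuous fun k : ℝ => Complex.exp (-Complex.I * k * x.2) :=
    Complex.continuous_exp.comp ((continuous_const.mul Complex.continuous_ofReal).mul
      continuous_const)
  have haff : Continuous fun k : ℝ => x.1 - k / b :=
    continuous_const.sub (continuous_id.div_const b)
  have hA : Continuous fun k : ℝ => η (x.1 - k / b) := hη.continuous.comp haff
  have mD2 : AEStronglyMeasurable (fun k : ℝ => deriv (deriv η) (x.1 - k / b)) volume :=
    ((measurable_deriv _).comp
      (measurable_const.sub (measurable_id.div_const b))).aestronglyMeasurable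
  -- integrability of the four integrands
  have intT0 : Integrable (fun k : ℝ =>
      Complex.exp (-Complex.I * k * x.2) * η (x.1 - k / b) * f k) volume := by
    refine hg.bdd_mul ((hce.mul hA).aestronglyMeasurable) (c := C0) (Filter.Eventually.of_forall fun k => ?_)
    rw [norm_mul, norm_exp_neg_I, one_mul]; exact hC0 _
  have intT1 : Integrable (fun k : ℝ =>
      Complex.exp (-Complex.I * k * x.2) * deriv (deriv η) (x.1 - k / b) * f k) volume := by
    refine hg.bdd_mul (hce.aestronglyMeasurable.mul mD2) (c := C2) (Filter.Eventually.of_forall fun k => ?_)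
    rw [norm_mul, norm_exp_neg_I, one_mul]; exact hC2 _
  have intT3 : Integrable (fun k : ℝ =>
      -Complex.I * k * Complex.exp (-Complex.I * k * x.2) * (η (x.1 - k / b) * f k)) volume := by
    refine (hg1.const_mul C0).mono'
      ((((continuous_const.mul Complex.continuous_ofReal).mul hce).mul
        (hA.mul f.continuous)).aestronglyMeasurable)
      (Filter.Eventually.of_forall fun k => ?_)
    have h' : ‖-Complex.I * (k : ℂ) * Complex.exp (-Complex.I * k * x.2) *
        (η (x.1 - k / b) * f k)‖ = ‖k‖ * (‖η (x.1 - k / b)‖ * ‖f k‖) := by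
      rw [norm_mul, norm_mul, norm_exp_neg_I, mul_one]
      simp [norm_mul]
    rw [h', pow_one]
    calc ‖k‖ * (‖η (x.1 - k / b)‖ * ‖f k‖) ≤ ‖k‖ * (C0 * ‖f k‖) := by
          have := hC0 (x.1 - k / b); gcongr
      _ = C0 * (‖k‖ * ‖f k‖) := by ring
  have intT2 : Integrable (fun k : ℝ =>
      -Complex.I * k * Complex.exp (-Complex.I * k * x.2) *
        (-Complex.I * k * (η (x.1 - k / b) * f k))) volume := by
    refine (hg2.const_mul C0).mono'
      ((((continuous_const.mul Complex.continuous_ofReal).mul hce).mul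
        ((continuous_const.mul Complex.continuous_ofReal).mul
          (hA.mul f.continuous))).aestronglyMeasurable)
      (Filter.Eventually.of_forall fun k => ?_)
    have h' : ‖-Complex.I * (k : ℂ) * Complex.exp (-Complex.I * k * x.2) *
        (-Complex.I * (k : ℂ) * (η (x.1 - k / b) * f k))‖
        = ‖k‖ * (‖k‖ * (‖η (x.1 - k / b)‖ * ‖f k‖)) := by
      rw [norm_mul, norm_mul, norm_exp_neg_I, mul_one]
      simp [norm_mul]
    rw [h']
    calc ‖k‖ * (‖k‖ * (‖η (x.1 - k / b)‖ * ‖f k‖)) ≤ ‖k‖ * (‖k‖ * (C0 * ‖f k‖)) := by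
          have := hC0 (x.1 - k / b); gcongr
      _ = C0 * (‖k‖ ^ 2 * ‖f k‖) := by ring
  -- x₁ derivatives
  have d1 : deriv (fun t => wigner b η ⇑f (t, x.2)) =
      fun t => wc * ∫ k : ℝ, Complex.exp (-Complex.I * k * x.2) * deriv η (t - k / b) * f k :=
    funext fun t =>
      ((hasDerivAt_int_shift b x.2 η ⇑f hη ⟨C0, hC0⟩ h1 hg t).const_mul wc).deriv
  have d2 : deriv (deriv (fun t => wigner b η ⇑f (t, x.2))) x.1 =
      wc * ∫ k : ℝ, Complex.exp (-Complex.I * k * x.2) * deriv (deriv η) (x.1 - k / b) * f k := by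
    rw [d1]
    exact ((hasDerivAt_int_shift b x.2 (deriv η) ⇑f hη' h1 ⟨C2, hC2⟩ hg x.1).const_mul wc).deriv
  -- x₂ derivatives
  have hGm : AEStronglyMeasurable (fun k : ℝ => η (x.1 - k / b) * f k) volume :=
    (hA.mul f.continuous).aestronglyMeasurable
  have hGint : Integrable (fun k : ℝ => η (x.1 - k / b) * f k) volume :=
    hg.bdd_mul hA.aestronglyMeasurable (c := C0) (Filter.Eventually.of_forall fun k => hC0 _)
  have hGint1 : Integrable (fun k : ℝ => ‖k‖ * ‖η (x.1 - k / b) * f k‖) volume := by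
    refine (hg1.const_mul C0).mono'
      (continuous_norm.aestronglyMeasurable.mul
        ((hA.mul f.continuous).norm.aestronglyMeasurable))
      (Filter.Eventually.of_forall fun k => ?_)
    rw [Real.norm_of_nonneg (by positivity), norm_mul, pow_one]
    calc ‖k‖ * (‖η (x.1 - k / b)‖ * ‖f k‖) ≤ ‖k‖ * (C0 * ‖f k‖) := by
          have := hC0 (x.1 - k / b); gcongr
      _ = C0 * (‖k‖ * ‖f k‖) := by ring
  have hfun : (fun s => wigner b η ⇑f (x.1, s)) =
      fun s : ℝ => wc * ∫ k : ℝ, Complex.exp (-Complex.I * k * s) * (η (x.1 - k / b) * f k) := by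
    funext s
    rw [wigner_eq]
    exact congrArg (wc * ·) (integral_congr_ae
      (Filter.Eventually.of_forall fun k => mul_assoc _ _ _))
  have e1 : deriv (fun s => wigner b η ⇑f (x.1, s)) =
      fun s : ℝ => wc * ∫ k : ℝ, -Complex.I * k * Complex.exp (-Complex.I * k * s) *
        (η (x.1 - k / b) * f k) := by
    rw [hfun]
    exact funext fun s =>
      ((hasDerivAt_int_exp _ hGm hGint hGint1 s).const_mul wc).deriv
  have e1x : deriv (fun s => wigner b η ⇑f (x.1, s)) x.2 =
      wc * ∫ k : ℝ, -Complex.I * k * Complex.exp (-Complex.I * k * x.2) *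
        (η (x.1 - k / b) * f k) := by rw [e1]
  have hG2m : AEStronglyMeasurable (fun k : ℝ => -Complex.I * k * (η (x.1 - k / b) * f k))
      volume := ((continuous_const.mul Complex.continuous_ofReal).mul
        (hA.mul f.continuous)).aestronglyMeasurable
  have hG2int : Integrable (fun k : ℝ => -Complex.I * k * (η (x.1 - k / b) * f k)) volume := by
    refine (hg1.const_mul C0).mono' hG2m (Filter.Eventually.of_forall fun k => ?_)
    have h' : ‖-Complex.I * (k : ℂ) * (η (x.1 - k / b) * f k)‖
        = ‖k‖ * (‖η (x.1 - k / b)‖ * ‖f k‖) := by simp [norm_mul]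
    rw [h', pow_one]
    calc ‖k‖ * (‖η (x.1 - k / b)‖ * ‖f k‖) ≤ ‖k‖ * (C0 * ‖f k‖) := by
          have := hC0 (x.1 - k / b); gcongr
      _ = C0 * (‖k‖ * ‖f k‖) := by ring
  have hG2int1 : Integrable
      (fun k : ℝ => ‖k‖ * ‖-Complex.I * k * (η (x.1 - k / b) * f k)‖) volume := by
    refine (hg2.const_mul C0).mono'
      (continuous_norm.aestronglyMeasurable.mul
        (((continuous_const.mul Complex.continuous_ofReal).mul
          (hA.mul f.continuous)).norm.aestronglyMeasurable))
      (Filter.Eventually.of_forall fun k => ?_)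
    have h' : ‖-Complex.I * (k : ℂ) * (η (x.1 - k / b) * f k)‖
        = ‖k‖ * (‖η (x.1 - k / b)‖ * ‖f k‖) := by simp [norm_mul]
    rw [Real.norm_of_nonneg (by positivity), h']
    calc ‖k‖ * (‖k‖ * (‖η (x.1 - k / b)‖ * ‖f k‖)) ≤ ‖k‖ * (‖k‖ * (C0 * ‖f k‖)) := by
          have := hC0 (x.1 - k / b); gcongr
      _ = C0 * (‖k‖ ^ 2 * ‖f k‖) := by ring
  have e2 : deriv (deriv (fun s => wigner b η ⇑f (x.1, s))) x.2 =
      wc * ∫ k : ℝ, -Complex.I * k * Complex.exp (-Complex.I * k * x.2) *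
        (-Complex.I * k * (η (x.1 - k / b) * f k)) := by
    rw [e1]
    have hfun2 : (fun s : ℝ => wc * ∫ k : ℝ, -Complex.I * k *
        Complex.exp (-Complex.I * k * s) * (η (x.1 - k / b) * f k)) =
        fun s : ℝ => wc * ∫ k : ℝ, Complex.exp (-Complex.I * k * s) *
          (-Complex.I * k * (η (x.1 - k / b) * f k)) := by
      funext s
      exact congrArg (wc * ·) (integral_congr_ae
        (Filter.Eventually.of_forall fun k => by ring))
    rw [hfun2]
    exact ((hasDerivAt_int_exp _ hG2m hG2int hG2int1 x.2).const_mul wc).deriv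
  -- pointwise identity
  have hpoint : ∀ k : ℝ,
      Complex.exp (-Complex.I * k * x.2) *
          (-(deriv (deriv η) (x.1 - k / b)) +
            (b : ℂ) ^ 2 * (((x.1 - k / b : ℝ) : ℂ)) ^ 2 * η (x.1 - k / b)) * f k
      = -(Complex.exp (-Complex.I * k * x.2) * deriv (deriv η) (x.1 - k / b) * f k)
        - -Complex.I * k * Complex.exp (-Complex.I * k * x.2) *
            (-Complex.I * k * (η (x.1 - k / b) * f k))
        - 2 * Complex.I * b * x.1 *
            (-Complex.I * k * Complex.exp (-Complex.I * k * x.2) * (η (x.1 - k / b) * f k))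
        + (b : ℂ) ^ 2 * (x.1 : ℂ) ^ 2 *
            (Complex.exp (-Complex.I * k * x.2) * η (x.1 - k / b) * f k) := by
    intro k
    have hsq : (b : ℂ) ^ 2 * ((x.1 : ℂ) - (k : ℂ) / (b : ℂ)) ^ 2 =
        (k : ℂ) ^ 2 - 2 * b * x.1 * k + (b : ℂ) ^ 2 * (x.1 : ℂ) ^ 2 := by
      field_simp
      ring
    push_cast
    rw [hsq]
    linear_combination (-(2 * (b : ℂ) * (x.1 : ℂ) * (k : ℂ) - (k : ℂ) ^ 2) *
      Complex.exp (-Complex.I * k * x.2) * η (x.1 - k / b) * f k) * Complex.I_sq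
  -- splitting the integral
  have s1 : (∫ k : ℝ,
      (-(Complex.exp (-Complex.I * k * x.2) * deriv (deriv η) (x.1 - k / b) * f k)
        - -Complex.I * k * Complex.exp (-Complex.I * k * x.2) *
            (-Complex.I * k * (η (x.1 - k / b) * f k))
        - 2 * Complex.I * b * x.1 *
            (-Complex.I * k * Complex.exp (-Complex.I * k * x.2) * (η (x.1 - k / b) * f k))
        + (b : ℂ) ^ 2 * (x.1 : ℂ) ^ 2 *
            (Complex.exp (-Complex.I * k * x.2) * η (x.1 - k / b) * f k)))
      = (∫ k : ℝ,
      (-(Complex.exp (-Complex.I * k * x.2) * deriv (deriv η) (x.1 - k / b) * f k)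
        - -Complex.I * k * Complex.exp (-Complex.I * k * x.2) *
            (-Complex.I * k * (η (x.1 - k / b) * f k))
        - 2 * Complex.I * b * x.1 *
            (-Complex.I * k * Complex.exp (-Complex.I * k * x.2) * (η (x.1 - k / b) * f k))))
      + ∫ k : ℝ, (b : ℂ) ^ 2 * (x.1 : ℂ) ^ 2 *
            (Complex.exp (-Complex.I * k * x.2) * η (x.1 - k / b) * f k) :=
    integral_add ((intT1.neg.sub intT2).sub (intT3.const_mul _)) (intT0.const_mul _)
  have s2 : (∫ k : ℝ,
      (-(Complex.exp (-Complex.I * k * x.2) * deriv (deriv η) (x.1 - k / b) * f k)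
        - -Complex.I * k * Complex.exp (-Complex.I * k * x.2) *
            (-Complex.I * k * (η (x.1 - k / b) * f k))
        - 2 * Complex.I * b * x.1 *
            (-Complex.I * k * Complex.exp (-Complex.I * k * x.2) * (η (x.1 - k / b) * f k))))
      = (∫ k : ℝ,
      (-(Complex.exp (-Complex.I * k * x.2) * deriv (deriv η) (x.1 - k / b) * f k)
        - -Complex.I * k * Complex.exp (-Complex.I * k * x.2) *
            (-Complex.I * k * (η (x.1 - k / b) * f k))))
      - ∫ k : ℝ, 2 * Complex.I * b * x.1 *
            (-Complex.I * k * Complex.exp (-Complex.I * k * x.2) * (η (x.1 - k / b) * f k)) :=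
    integral_sub (intT1.neg.sub intT2) (intT3.const_mul _)
  have s3 : (∫ k : ℝ,
      (-(Complex.exp (-Complex.I * k * x.2) * deriv (deriv η) (x.1 - k / b) * f k)
        - -Complex.I * k * Complex.exp (-Complex.I * k * x.2) *
            (-Complex.I * k * (η (x.1 - k / b) * f k))))
      = (∫ k : ℝ, -(Complex.exp (-Complex.I * k * x.2) * deriv (deriv η) (x.1 - k / b) * f k))
      - ∫ k : ℝ, -Complex.I * k * Complex.exp (-Complex.I * k * x.2) *
            (-Complex.I * k * (η (x.1 - k / b) * f k)) :=
    integral_sub intT1.neg intT2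
  have s4 : (∫ k : ℝ,
      -(Complex.exp (-Complex.I * k * x.2) * deriv (deriv η) (x.1 - k / b) * f k))
      = -∫ k : ℝ, Complex.exp (-Complex.I * k * x.2) * deriv (deriv η) (x.1 - k / b) * f k :=
    integral_neg _
  have s5 : (∫ k : ℝ, 2 * Complex.I * (b : ℂ) * (x.1 : ℂ) *
        (-Complex.I * k * Complex.exp (-Complex.I * k * x.2) * (η (x.1 - k / b) * f k)))
      = 2 * Complex.I * (b : ℂ) * (x.1 : ℂ) * ∫ k : ℝ,
        -Complex.I * k * Complex.exp (-Complex.I * k * x.2) * (η (x.1 - k / b) * f k) :=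
    integral_const_mul _ _
  have s6 : (∫ k : ℝ, (b : ℂ) ^ 2 * (x.1 : ℂ) ^ 2 *
        (Complex.exp (-Complex.I * k * x.2) * η (x.1 - k / b) * f k))
      = (b : ℂ) ^ 2 * (x.1 : ℂ) ^ 2 * ∫ k : ℝ,
        Complex.exp (-Complex.I * k * x.2) * η (x.1 - k / b) * f k :=
    integral_const_mul _ _
  have hsplit : (∫ k : ℝ, Complex.exp (-Complex.I * k * x.2) *
          (-(deriv (deriv η) (x.1 - k / b)) +
            (b : ℂ) ^ 2 * (((x.1 - k / b : ℝ) : ℂ)) ^ 2 * η (x.1 - k / b)) * f k)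
      = -(∫ k : ℝ, Complex.exp (-Complex.I * k * x.2) * deriv (deriv η) (x.1 - k / b) * f k)
        - (∫ k : ℝ, -Complex.I * k * Complex.exp (-Complex.I * k * x.2) *
            (-Complex.I * k * (η (x.1 - k / b) * f k)))
        - 2 * Complex.I * b * x.1 *
            (∫ k : ℝ, -Complex.I * k * Complex.exp (-Complex.I * k * x.2) *
              (η (x.1 - k / b) * f k))
        + (b : ℂ) ^ 2 * (x.1 : ℂ) ^ 2 *
            (∫ k : ℝ, Complex.exp (-Complex.I * k * x.2) * η (x.1 - k / b) * f k) := by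
    rw [integral_congr_ae (Filter.Eventually.of_forall hpoint), s1, s2, s3, s4, s5, s6]
  simp only [landauOp]
  rw [d2, e2, e1x, wigner_eq, wigner_eq, hsplit]
  ring

section Hermite
open Polynomial

noncomputable def Qp : ℕ → Polynomial ℝ
  | 0 => 1
  | n + 1 => Polynomial.derivative (Qp n) - Polynomial.C 2 * Polynomial.X * Qp n

lemma iteratedDeriv_gauss (n : ℕ) :
    iteratedDeriv n (fun y : ℝ => Real.exp (-(y ^ 2))) =
      fun x => (Qp n).eval x * Real.exp (-(x ^ 2)) := by
  induction n with
  | zero => funext x; simp [Qp]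
  | succ n ih =>
    rw [iteratedDeriv_succ, ih]
    funext x
    have hinner : HasDerivAt (fun y : ℝ => -(y ^ 2)) (-(2 * x)) x := by
      have h := (hasDerivAt_pow 2 x).fun_neg
      refine h.congr_deriv ?_
      push_cast
      ring
    have h := (Polynomial.hasDerivAt (Qp n) x).fun_mul hinner.exp
    rw [h.deriv]
    show _ = (Polynomial.derivative (Qp n) - Polynomial.C 2 * Polynomial.X * Qp n).eval x * _
    simp only [Polynomial.eval_sub, Polynomial.eval_mul, Polynomial.eval_C, Polynomial.eval_X]
    ring

lemma Qp_succ (n : ℕ) :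
    Qp (n + 1) = Polynomial.derivative (Qp n) - Polynomial.C 2 * Polynomial.X * Qp n := rfl

lemma Qp_deriv (n : ℕ) :
    Polynomial.derivative (Qp (n + 1)) = Polynomial.C (-2 * ((n : ℝ) + 1)) * Qp n := by
  induction n with
  | zero =>
    rw [Qp_succ]
    simp [Qp]
  | succ n ih =>
    have hrec : Polynomial.derivative (Qp n) =
        Qp (n + 1) + Polynomial.C 2 * Polynomial.X * Qp n := by
      rw [Qp_succ]; ring
    rw [Qp_succ (n + 1), derivative_sub, ih]
    simp only [derivative_mul, derivative_C, derivative_X, ih]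
    rw [hrec]
    push_cast
    simp only [map_mul, map_add, map_neg, map_one, map_ofNat]
    ring

lemma Qp_ode (n : ℕ) :
    Polynomial.derivative (Polynomial.derivative (Qp n)) =
      Polynomial.C 2 * Polynomial.X * Polynomial.derivative (Qp n)
        - Polynomial.C (2 * (n : ℝ)) * Qp n := by
  cases n with
  | zero => simp [Qp]
  | succ n =>
    have hrec : Polynomial.derivative (Qp n) =
        Qp (n + 1) + Polynomial.C 2 * Polynomial.X * Qp n := by
      rw [Qp_succ]; ring
    rw [Qp_deriv, derivative_mul, derivative_C, hrec]
    push_cast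
    simp only [map_mul, map_add, map_neg, map_one, map_ofNat]
    ring

lemma physHermite_eq (n : ℕ) (x : ℝ) :
    physHermite n x = (-1 : ℝ) ^ n * (Qp n).eval x := by
  rw [physHermite, iteratedDeriv_gauss]
  have h : Real.exp (x ^ 2) * Real.exp (-(x ^ 2)) = 1 := by
    rw [← Real.exp_add]; simp
  calc (-1 : ℝ) ^ n * Real.exp (x ^ 2) * ((Qp n).eval x * Real.exp (-(x ^ 2)))
      = (-1 : ℝ) ^ n * (Qp n).eval x * (Real.exp (x ^ 2) * Real.exp (-(x ^ 2))) := by ring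
    _ = (-1 : ℝ) ^ n * (Qp n).eval x := by rw [h, mul_one]

noncomputable def cc (b : ℝ) (n : ℕ) : ℝ :=
  (-1 : ℝ) ^ n * ((Real.sqrt (2 ^ n * Nat.factorial n))⁻¹ * (π ^ ((1 : ℝ) / 4))⁻¹ *
    b ^ ((1 : ℝ) / 4))

noncomputable def Pn (b : ℝ) (n : ℕ) : Polynomial ℝ :=
  Polynomial.C (cc b n) * (Qp n).comp (Polynomial.C (Real.sqrt b) * Polynomial.X)

lemma landauPhi_eq (b : ℝ) (n : ℕ) :
    landauPhi b n = fun y => (Pn b n).eval y * Real.exp (-(b * y ^ 2) / 2) := by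
  funext y
  rw [landauPhi, physHermite_eq]
  simp only [Pn, cc, Polynomial.eval_mul, Polynomial.eval_C, Polynomial.eval_comp,
    Polynomial.eval_X]
  ring

noncomputable def Dg (b : ℝ) (P : Polynomial ℝ) : Polynomial ℝ :=
  Polynomial.derivative P - Polynomial.C b * Polynomial.X * P

lemma hasDerivAt_polyGauss (b : ℝ) (P : Polynomial ℝ) (x : ℝ) :
    HasDerivAt (fun y => P.eval y * Real.exp (-(b * y ^ 2) / 2))
      ((Dg b P).eval x * Real.exp (-(b * x ^ 2) / 2)) x := by
  have hinner : HasDerivAt (fun y : ℝ => -(b * y ^ 2) / 2) (-(b * (2 * x)) / 2) x := by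
    have h := (((hasDerivAt_pow 2 x).const_mul b).fun_neg).div_const 2
    refine h.congr_deriv ?_
    push_cast
    ring
  have h := (Polynomial.hasDerivAt P x).fun_mul hinner.exp
  refine h.congr_deriv ?_
  simp only [Dg, Polynomial.eval_sub, Polynomial.eval_mul, Polynomial.eval_C, Polynomial.eval_X]
  ring

lemma pow_mul_gauss_le (b : ℝ) (hb : 0 < b) (i : ℕ) (x : ℝ) :
    |x| ^ i * Real.exp (-(b * x ^ 2) / 2) ≤ max 1 ((i.factorial : ℝ) * (2 / b) ^ i) := by
  have hexp : Real.exp (-(b * x ^ 2) / 2) ≤ 1 := by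
    rw [Real.exp_le_one_iff]
    nlinarith [sq_nonneg x, hb.le]
  rcases le_or_gt |x| 1 with h | h
  · refine le_max_of_le_left ?_
    have h1 : |x| ^ i ≤ 1 := pow_le_one₀ (abs_nonneg x) h
    nlinarith [Real.exp_pos (-(b * x ^ 2) / 2), pow_nonneg (abs_nonneg x) i]
  · refine le_max_of_le_right ?_
    have hx0 : (0 : ℝ) < |x| := lt_trans one_pos h
    have hxne : x ≠ 0 := by
      intro h0
      rw [h0] at hx0
      simp at hx0
    have ht : 0 ≤ b * x ^ 2 / 2 := by positivity
    have h1 : (b * x ^ 2 / 2) ^ i / (i.factorial : ℝ) ≤ Real.exp (b * x ^ 2 / 2) :=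
      Real.pow_div_factorial_le_exp _ ht i
    have hfac : (0 : ℝ) < (i.factorial : ℝ) := by positivity
    have key1 : Real.exp (-(b * x ^ 2) / 2) * (b * x ^ 2 / 2) ^ i ≤ (i.factorial : ℝ) := by
      have h3 : Real.exp (-(b * x ^ 2) / 2) * ((b * x ^ 2 / 2) ^ i / (i.factorial : ℝ)) ≤
          Real.exp (-(b * x ^ 2) / 2) * Real.exp (b * x ^ 2 / 2) := by
        have := (Real.exp_pos (-(b * x ^ 2) / 2)).le
        gcongr
      rw [← Real.exp_add] at h3
      have h4 : -(b * x ^ 2) / 2 + b * x ^ 2 / 2 = 0 := by ring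
      rw [h4, Real.exp_zero] at h3
      calc Real.exp (-(b * x ^ 2) / 2) * (b * x ^ 2 / 2) ^ i
          = Real.exp (-(b * x ^ 2) / 2) * ((b * x ^ 2 / 2) ^ i / (i.factorial : ℝ)) *
            (i.factorial : ℝ) := by field_simp
        _ ≤ 1 * (i.factorial : ℝ) := by gcongr
        _ = (i.factorial : ℝ) := one_mul _
    have hpow2 : (b * x ^ 2 / 2) ^ i = (b / 2) ^ i * |x| ^ i * |x| ^ i := by
      have h5 : b * x ^ 2 / 2 = b / 2 * (|x| * |x|) := by
        rw [abs_mul_abs_self]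
        ring
      rw [h5, mul_pow, mul_pow]
      ring
    have hxpow : (1 : ℝ) ≤ |x| ^ i := one_le_pow₀ h.le
    have step : Real.exp (-(b * x ^ 2) / 2) * ((b / 2) ^ i * |x| ^ i) ≤ (i.factorial : ℝ) := by
      calc Real.exp (-(b * x ^ 2) / 2) * ((b / 2) ^ i * |x| ^ i)
          ≤ Real.exp (-(b * x ^ 2) / 2) * ((b / 2) ^ i * |x| ^ i) * |x| ^ i :=
            le_mul_of_one_le_right (by positivity) hxpow
        _ = Real.exp (-(b * x ^ 2) / 2) * (b * x ^ 2 / 2) ^ i := by rw [hpow2]; ring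
        _ ≤ (i.factorial : ℝ) := key1
    have hpos : (0 : ℝ) < (2 / b) ^ i := by positivity
    have hmul := mul_le_mul_of_nonneg_right step hpos.le
    have hcanc : (b / 2) ^ i * (2 / b) ^ i = 1 := by
      rw [← mul_pow]
      have : b / 2 * (2 / b) = 1 := by field_simp
      rw [this, one_pow]
    have hrw : |x| ^ i * Real.exp (-(b * x ^ 2) / 2) =
        Real.exp (-(b * x ^ 2) / 2) * ((b / 2) ^ i * |x| ^ i) * (2 / b) ^ i := by
      linear_combination (-(|x| ^ i * Real.exp (-(b * x ^ 2) / 2))) * hcanc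
    rw [hrw]
    exact hmul

lemma polyGauss_bounded (b : ℝ) (hb : 0 < b) (P : Polynomial ℝ) :
    ∃ C, ∀ x, |P.eval x * Real.exp (-(b * x ^ 2) / 2)| ≤ C := by
  refine ⟨∑ i ∈ Finset.range (P.natDegree + 1),
    |P.coeff i| * max 1 ((i.factorial : ℝ) * (2 / b) ^ i), fun x => ?_⟩
  rw [abs_mul, Real.abs_exp]
  have heval : |P.eval x| ≤ ∑ i ∈ Finset.range (P.natDegree + 1), |P.coeff i| * |x| ^ i := by
    rw [Polynomial.eval_eq_sum_range]
    refine (Finset.abs_sum_le_sum_abs _ _).trans ?_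
    refine Finset.sum_le_sum fun i _ => ?_
    rw [abs_mul, abs_pow]
  calc |P.eval x| * Real.exp (-(b * x ^ 2) / 2)
      ≤ (∑ i ∈ Finset.range (P.natDegree + 1), |P.coeff i| * |x| ^ i) *
        Real.exp (-(b * x ^ 2) / 2) :=
        mul_le_mul_of_nonneg_right heval (Real.exp_pos _).le
    _ = ∑ i ∈ Finset.range (P.natDegree + 1),
        |P.coeff i| * (|x| ^ i * Real.exp (-(b * x ^ 2) / 2)) := by
        rw [Finset.sum_mul]
        exact Finset.sum_congr rfl fun i _ => by ring
    _ ≤ ∑ i ∈ Finset.range (P.natDegree + 1),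
        |P.coeff i| * max 1 ((i.factorial : ℝ) * (2 / b) ^ i) :=
        Finset.sum_le_sum fun i _ =>
          mul_le_mul_of_nonneg_left (pow_mul_gauss_le b hb i x) (abs_nonneg _)

lemma landau_eigen (b : ℝ) (hb : 0 < b) (n : ℕ) (y : ℝ) :
    -((Dg b (Dg b (Pn b n))).eval y * Real.exp (-(b * y ^ 2) / 2)) +
        b ^ 2 * y ^ 2 * ((Pn b n).eval y * Real.exp (-(b * y ^ 2) / 2)) =
      b * (2 * (n : ℝ) + 1) * ((Pn b n).eval y * Real.exp (-(b * y ^ 2) / 2)) := by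
  have hs : Real.sqrt b ^ 2 = b := Real.sq_sqrt hb.le
  have hq := congrArg (Polynomial.eval (Real.sqrt b * y)) (Qp_ode n)
  simp only [Polynomial.eval_sub, Polynomial.eval_mul, Polynomial.eval_C,
    Polynomial.eval_X] at hq
  have e1 : Polynomial.derivative (Pn b n) =
      Polynomial.C (cc b n * Real.sqrt b) *
        (Polynomial.derivative (Qp n)).comp (Polynomial.C (Real.sqrt b) * Polynomial.X) := by
    simp only [Pn, derivative_mul, derivative_C, zero_mul, zero_add, derivative_comp,
      derivative_mul, derivative_C, derivative_X, mul_one, map_mul]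
    ring
  have e2 : Polynomial.derivative (Polynomial.derivative (Pn b n)) =
      Polynomial.C (cc b n * Real.sqrt b * Real.sqrt b) *
        (Polynomial.derivative (Polynomial.derivative (Qp n))).comp
          (Polynomial.C (Real.sqrt b) * Polynomial.X) := by
    rw [e1]
    simp only [derivative_mul, derivative_C, zero_mul, zero_add, derivative_comp,
      derivative_mul, derivative_C, derivative_X, mul_one, map_mul]
    ring
  have v0 : (Pn b n).eval y = cc b n * (Qp n).eval (Real.sqrt b * y) := by
    simp [Pn, Polynomial.eval_comp]
  have v1 : (Polynomial.derivative (Pn b n)).eval y =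
      cc b n * Real.sqrt b * (Polynomial.derivative (Qp n)).eval (Real.sqrt b * y) := by
    rw [e1]; simp [Polynomial.eval_comp]
  have v2 : (Polynomial.derivative (Polynomial.derivative (Pn b n))).eval y =
      cc b n * Real.sqrt b * Real.sqrt b *
        (Polynomial.derivative (Polynomial.derivative (Qp n))).eval (Real.sqrt b * y) := by
    rw [e2]; simp [Polynomial.eval_comp]
  simp only [Dg, Polynomial.eval_sub, Polynomial.eval_mul, Polynomial.eval_C, Polynomial.eval_X,
    derivative_sub, derivative_mul, derivative_C, derivative_X, zero_mul, zero_add, mul_one,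
    Polynomial.eval_add]
  rw [v2, v1, v0]
  linear_combination
    (-(Real.exp (-(b * y ^ 2) / 2)) * (cc b n) * Real.sqrt b * Real.sqrt b) * hq +
      ((2 * Real.exp (-(b * y ^ 2) / 2) * cc b n * (n : ℝ) *
          (Qp n).eval (Real.sqrt b * y) -
        2 * Real.exp (-(b * y ^ 2) / 2) * cc b n * Real.sqrt b * y *
          (Polynomial.derivative (Qp n)).eval (Real.sqrt b * y))) * hs

end Hermite

lemma wigner_const_smul (b : ℝ) (c : ℂ) (φ g : ℝ → ℂ) (x : ℝ × ℝ) :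
    wigner b (fun y => c * φ y) g x = c * wigner b φ g x := by
  rw [wigner_eq, wigner_eq]
  rw [show (∫ k : ℝ, Complex.exp (-Complex.I * k * x.2) * (c * φ (x.1 - k / b)) * g k)
      = c * ∫ k : ℝ, Complex.exp (-Complex.I * k * x.2) * φ (x.1 - k / b) * g k from by
    rw [← integral_const_mul]
    exact integral_congr_ae (Filter.Eventually.of_forall fun k => by ring)]
  ring

/-- For Schwartz `ζ, f` on `ℝ`, the Landau operator maps `W(ζ,f)` to `W(ζ̃,f)` with
`ζ̃ = −ζ'' + b² x² ζ`; in particular `L_A[W(φₙ,f)] = b(2n+1) W(φₙ,f)`. -/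
theorem landauOp_wigner (b : ℝ) (hb : 0 < b) (f : SchwartzMap ℝ ℂ) :
    (∀ ζ : SchwartzMap ℝ ℂ, ∀ x : ℝ × ℝ,
      landauOp b (wigner b (⇑ζ) (⇑f)) x =
        wigner b (fun y => -(deriv (deriv (⇑ζ)) y) + (b : ℂ) ^ 2 * y ^ 2 * ζ y) (⇑f) x) ∧
    (∀ n : ℕ, ∀ x : ℝ × ℝ,
      landauOp b (wigner b (fun y => (landauPhi b n y : ℂ)) (⇑f)) x =
        b * (2 * n + 1) * wigner b (fun y => (landauPhi b n y : ℂ)) (⇑f) x) := by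
  have bnd : ∀ g : SchwartzMap ℝ ℂ, ∃ C, ∀ y, ‖g y‖ ≤ C := fun g =>
    ⟨SchwartzMap.seminorm ℝ 0 0 g, fun y => SchwartzMap.norm_le_seminorm ℝ g y⟩
  constructor
  · intro ζ x
    have hd1 : deriv (⇑ζ) = ⇑(SchwartzMap.derivCLM ℝ ℂ ζ) :=
      funext fun y => (SchwartzMap.derivCLM_apply (𝕜 := ℝ) ζ y).symm
    have hd2 : deriv (deriv (⇑ζ)) =
        ⇑(SchwartzMap.derivCLM ℝ ℂ (SchwartzMap.derivCLM ℝ ℂ ζ)) := by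
      rw [hd1]
      exact funext fun y => (SchwartzMap.derivCLM_apply (𝕜 := ℝ) _ y).symm
    refine landau_key b hb f (⇑ζ) ζ.differentiable ?_ (bnd ζ) ?_ ?_ x
    · rw [hd1]; exact SchwartzMap.differentiable _
    · rw [hd1]; exact bnd _
    · rw [hd2]; exact bnd _
  · intro n x
    have hφ' : ∀ z : ℝ, landauPhi b n z = (Pn b n).eval z * Real.exp (-(b * z ^ 2) / 2) :=
      fun z => congrFun (landauPhi_eq b n) z
    have hlam : (fun y : ℝ => ((landauPhi b n y : ℝ) : ℂ)) =
        fun y => (((Pn b n).eval y * Real.exp (-(b * y ^ 2) / 2) : ℝ) : ℂ) := by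
      funext y; rw [hφ']
    have hder : deriv (fun y : ℝ => ((landauPhi b n y : ℝ) : ℂ)) =
        fun y => (((Dg b (Pn b n)).eval y * Real.exp (-(b * y ^ 2) / 2) : ℝ) : ℂ) := by
      rw [hlam]
      exact funext fun y => ((hasDerivAt_polyGauss b (Pn b n) y).ofReal_comp).deriv
    have hder2 : deriv (deriv (fun y : ℝ => ((landauPhi b n y : ℝ) : ℂ))) =
        fun y => (((Dg b (Dg b (Pn b n))).eval y * Real.exp (-(b * y ^ 2) / 2) : ℝ) : ℂ) := by
      rw [hder]
      exact funext fun y => ((hasDerivAt_polyGauss b (Dg b (Pn b n)) y).ofReal_comp).deriv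
    have hdiff : Differentiable ℝ (fun y : ℝ => ((landauPhi b n y : ℝ) : ℂ)) := by
      rw [hlam]
      exact fun y => ((hasDerivAt_polyGauss b (Pn b n) y).ofReal_comp).differentiableAt
    have hdiff' : Differentiable ℝ (deriv (fun y : ℝ => ((landauPhi b n y : ℝ) : ℂ))) := by
      rw [hder]
      exact fun y => ((hasDerivAt_polyGauss b (Dg b (Pn b n)) y).ofReal_comp).differentiableAt
    have hb0 : ∃ C, ∀ y : ℝ, ‖((landauPhi b n y : ℝ) : ℂ)‖ ≤ C := by
      obtain ⟨C, hC⟩ := polyGauss_bounded b hb (Pn b n)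
      refine ⟨C, fun y => ?_⟩
      rw [hφ' y, Complex.norm_real, Real.norm_eq_abs]
      exact hC y
    have hb1 : ∃ C, ∀ y : ℝ, ‖deriv (fun y : ℝ => ((landauPhi b n y : ℝ) : ℂ)) y‖ ≤ C := by
      obtain ⟨C, hC⟩ := polyGauss_bounded b hb (Dg b (Pn b n))
      refine ⟨C, fun y => ?_⟩
      simp only [hder]
      rw [Complex.norm_real, Real.norm_eq_abs]
      exact hC y
    have hb2 : ∃ C, ∀ y : ℝ,
        ‖deriv (deriv (fun y : ℝ => ((landauPhi b n y : ℝ) : ℂ))) y‖ ≤ C := by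
      obtain ⟨C, hC⟩ := polyGauss_bounded b hb (Dg b (Dg b (Pn b n)))
      refine ⟨C, fun y => ?_⟩
      simp only [hder2]
      rw [Complex.norm_real, Real.norm_eq_abs]
      exact hC y
    have hk := landau_key b hb f (fun y : ℝ => ((landauPhi b n y : ℝ) : ℂ))
      hdiff hdiff' hb0 hb1 hb2 x
    have heig : (fun y : ℝ =>
        -(deriv (deriv (fun y : ℝ => ((landauPhi b n y : ℝ) : ℂ))) y) +
          (b : ℂ) ^ 2 * (y : ℂ) ^ 2 * ((landauPhi b n y : ℝ) : ℂ)) =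
        fun y : ℝ => ((b * (2 * (n : ℝ) + 1) : ℝ) : ℂ) * ((landauPhi b n y : ℝ) : ℂ) := by
      funext y
      simp only [hder2]
      simp only [hφ']
      exact_mod_cast landau_eigen b hb n y
    rw [hk]
    rw [heig, wigner_const_smul]
    push_cast
    ring
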